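/- Let H ∈ 𝔽₂^{m×n} be a matrix whose first m−1 rows all have Hamming weight exactly 2; let Ĥ be the (m−1)×n matrix of these rows, R the equivalence relation on I associated with Ĥ, and 𝒮 its set of equivalence classes. Assume the support I_m of the last row of H intersects each class in at most one element, and let 𝒮' = {S ∈ 𝒮 : |S ∩ I_m| = 1} and 𝒮'' = 𝒮 ∖ 𝒮'. If |𝒮'| ≥ 2 or 𝒮'' ≠ ∅, then the minimum max-fractional weight satisfies w_maxfrac^min(H) = min( min_{S,T ∈ 𝒮', S ≠ T} (|S| + |T|), min_{S ∈ 𝒮''} |S| ), where a minimum over the empty set is +∞. -/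

import Mathlib

open Matrix BigOperators Finset

section Defs

variable {J I : Type*} [Fintype J] [Fintype I] [DecidableEq I]

/-- The support of row `j` of a binary matrix `H`. -/
def rowSupp (H : Matrix J I (ZMod 2)) (j : J) : Finset I :=
  Finset.univ.filter fun i => H j i = 1

/-- The fundamental cone of a binary matrix `H`. -/
def fundCone (H : Matrix J I (ZMod 2)) : Set (I → ℝ) :=
  {x | (∀ i, 0 ≤ x i) ∧
    ∀ j : J, ∀ ℓ ∈ rowSupp H j, x ℓ ≤ ∑ i ∈ (rowSupp H j).erase ℓ, x i}

/-- BEC pseudoweight: size of the support. -/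
noncomputable def wBEC (x : I → ℝ) : ℝ := ({i | x i ≠ 0}.ncard : ℝ)

/-- AWGNC pseudoweight. -/
noncomputable def wAWGNC (x : I → ℝ) : ℝ := (∑ i, x i) ^ 2 / ∑ i, x i ^ 2

/-- Max-fractional weight. -/
noncomputable def wMaxFrac (x : I → ℝ) : ℝ := (∑ i, x i) / sSup (Set.range x)

/-- `H` is a parity-check matrix of the code `C`. -/
def IsParityCheck (H : Matrix J I (ZMod 2)) (C : Submodule (ZMod 2) (I → ZMod 2)) : Prop :=
  ∀ c, c ∈ C ↔ H.mulVec c = 0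

/-- Minimum Hamming distance of a code. -/
noncomputable def minDist (C : Submodule (ZMod 2) (I → ZMod 2)) : ℕ :=
  sInf {d | ∃ c ∈ C, c ≠ 0 ∧ hammingNorm c = d}

/-- Minimum pseudoweight of `H` w.r.t. pseudoweight function `w`:
the infimum of `w` over all nonzero pseudocodewords (`⊤` if there are none). -/
noncomputable def minPW (w : (I → ℝ) → ℝ) (H : Matrix J I (ZMod 2)) : EReal :=
  sInf ((fun x => (w x : EReal)) '' (fundCone H \ {0}))

/-- The chain (connectivity) relation associated with a binary matrix whose rows
have weight 2: `i` and `i'` are related iff they are equal or joined by a chain of rows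
whose supports are exactly consecutive pairs. -/
def chainRel (H : Matrix J I (ZMod 2)) (i i' : I) : Prop :=
  i = i' ∨ ∃ ℓ : ℕ, 1 ≤ ℓ ∧ ∃ (c : Fin (ℓ + 1) → I) (r : Fin ℓ → J),
    c 0 = i ∧ c (Fin.last ℓ) = i' ∧
    ∀ t : Fin ℓ, rowSupp H (r t) = {c t.castSucc, c t.succ}

/-- The 0-1 real matrix associated with a binary matrix. -/
def toRealMatrix (H : Matrix J I (ZMod 2)) : Matrix J I ℝ :=
  Matrix.of fun j i => if H j i = 1 then (1 : ℝ) else 0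

/-- The Tanner graph of a binary matrix. -/
def tannerGraph (H : Matrix J I (ZMod 2)) : SimpleGraph (J ⊕ I) :=
  SimpleGraph.fromRel fun u v => ∃ j i, u = Sum.inl j ∧ v = Sum.inr i ∧ H j i = 1

end Defs

/-- The multiset of (real) eigenvalues, with multiplicity, of a real square matrix:
the real roots of its characteristic polynomial. -/
noncomputable def eigMult {ι : Type*} [Fintype ι] [DecidableEq ι] (A : Matrix ι ι ℝ) :
    Multiset ℝ :=
  A.charpoly.roots

section FinDefs

variable {n : ℕ}

/-- The non-increasing rearrangement of a real vector. -/
noncomputable def sortDesc (x : Fin n → ℝ) : Fin n → ℝ :=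
  fun i => x (Tuple.sort (fun j => -x j) i)

/-- `Φ(ξ) = ∫₀^ξ φ`, where `φ(ξ) = x'_i` for `i - 1 < ξ ≤ i` and `x'` is the
non-increasing rearrangement of `x`. -/
noncomputable def bigPhi (x : Fin n → ℝ) (ξ : ℝ) : ℝ :=
  ∑ i : Fin n, sortDesc x i * min 1 (max 0 (ξ - (i : ℝ)))

/-- BSC pseudoweight: `2 Φ⁻¹(Φ(n)/2)`. -/
noncomputable def wBSC (x : Fin n → ℝ) : ℝ :=
  2 * sInf {ξ : ℝ | bigPhi x (n : ℝ) / 2 ≤ bigPhi x ξ}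

/-- The pseudocodeword redundancy of a code `C` w.r.t. the pseudoweight function `w`:
the smallest number of rows of a parity-check matrix `H` of `C` whose minimum
pseudoweight equals the minimum distance of `C` (`⊤` if there is no such matrix). -/
noncomputable def pcRedundancy (w : (Fin n → ℝ) → ℝ)
    (C : Submodule (ZMod 2) (Fin n → ZMod 2)) : ℕ∞ :=
  sInf {k : ℕ∞ | ∃ (m : ℕ) (H : Matrix (Fin m) (Fin n) (ZMod 2)),
    k = (m : ℕ∞) ∧ IsParityCheck H C ∧ minPW w H = ((minDist C : ℝ) : EReal)}

end FinDefs


set_option linter.unusedSectionVars false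
section Aux8

variable {J I : Type*} [Fintype J] [Fintype I] [DecidableEq I]

/-- One-step relation: two columns joined by a single weight-2 row. -/
def stepRel8 (Hh : Matrix J I (ZMod 2)) (a b : I) : Prop :=
  ∃ j, rowSupp Hh j = {a, b}

lemma stepRel8_symm {Hh : Matrix J I (ZMod 2)} {a b : I} (h : stepRel8 Hh a b) :
    stepRel8 Hh b a := by
  obtain ⟨j, hj⟩ := h
  exact ⟨j, by rw [hj, Finset.pair_comm]⟩

lemma chainRel_iff_rtg (Hh : Matrix J I (ZMod 2)) (a b : I) :
    chainRel Hh a b ↔ Relation.ReflTransGen (stepRel8 Hh) a b := by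
  constructor
  · rintro (rfl | ⟨ℓ, hℓ, c, r, hc0, hcl, hr⟩)
    · exact .refl
    · have claim : ∀ k : Fin (ℓ + 1), Relation.ReflTransGen (stepRel8 Hh) (c 0) (c k) := by
        intro k
        induction k using Fin.induction with
        | zero => exact .refl
        | succ k ih => exact ih.tail ⟨r k, hr k⟩
      rw [← hc0, ← hcl]
      exact claim _
  · intro h
    induction h with
    | refl => exact Or.inl rfl
    | @tail b c hab hbc ih =>
      obtain ⟨j, hj⟩ := hbc
      rcases ih with rfl | ⟨ℓ, hℓ, cc, r, h0, hl, hr⟩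
      · refine Or.inr ⟨1, le_refl 1, ![a, c], ![j], rfl, rfl, ?_⟩
        intro t
        have ht : t = 0 := Subsingleton.elim t 0
        subst ht
        simpa using hj
      · refine Or.inr ⟨ℓ + 1, by omega, Fin.snoc cc c, Fin.snoc r j, ?_, ?_, ?_⟩
        · have h00 : (0 : Fin (ℓ + 1 + 1)) = Fin.castSucc 0 := rfl
          rw [h00, Fin.snoc_castSucc, h0]
        · rw [Fin.snoc_last]
        · intro t
          induction t using Fin.lastCases with
          | last =>
            simp only [Fin.succ_last, Fin.snoc_last, Fin.snoc_castSucc]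
            rw [hl]
            exact hj
          | cast u =>
            simp only [Fin.succ_castSucc, Fin.snoc_castSucc]
            exact hr u

lemma chainRel_refl8 (Hh : Matrix J I (ZMod 2)) (a : I) : chainRel Hh a a := Or.inl rfl

lemma chainRel_symm8 {Hh : Matrix J I (ZMod 2)} {a b : I} (h : chainRel Hh a b) :
    chainRel Hh b a := by
  rw [chainRel_iff_rtg] at h ⊢
  exact (@Relation.ReflTransGen.symmetric _ _ ⟨fun x y hxy => stepRel8_symm hxy⟩).symm _ _ h

lemma chainRel_trans8 {Hh : Matrix J I (ZMod 2)} {a b c : I} (h1 : chainRel Hh a b)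
    (h2 : chainRel Hh b c) : chainRel Hh a c := by
  rw [chainRel_iff_rtg] at h1 h2 ⊢
  exact h1.trans h2

lemma chainRel_const8 {Hh : Matrix J I (ZMod 2)} {x : I → ℝ}
    (hcon : ∀ a b, stepRel8 Hh a b → x a = x b) {a b : I} (h : chainRel Hh a b) :
    x a = x b := by
  rw [chainRel_iff_rtg] at h
  induction h with
  | refl => rfl
  | tail _ hs ih => exact ih.trans (hcon _ _ hs)

lemma mem_fundCone_iff8 {m n : ℕ} (H : Matrix (Fin (m + 1)) (Fin n) (ZMod 2))
    (Hhat : Matrix (Fin m) (Fin n) (ZMod 2))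
    (hHhat : Hhat = Matrix.of fun j i => H j.castSucc i)
    (hrows : ∀ j, (rowSupp Hhat j).card = 2) (x : Fin n → ℝ) :
    x ∈ fundCone H ↔ (∀ i, 0 ≤ x i) ∧ (∀ a b, stepRel8 Hhat a b → x a = x b) ∧
      (∀ ℓ ∈ rowSupp H (Fin.last m), x ℓ ≤ ∑ i ∈ (rowSupp H (Fin.last m)).erase ℓ, x i) := by
  subst hHhat
  have hsupp : ∀ j : Fin m,
      rowSupp (Matrix.of fun j i => H j.castSucc i) j = rowSupp H j.castSucc := fun _ => rfl
  constructor
  · rintro ⟨h0, hc⟩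
    refine ⟨h0, ?_, fun ℓ hℓ => hc (Fin.last m) ℓ hℓ⟩
    rintro a b ⟨j, hj⟩
    have hab : a ≠ b := by
      intro h
      have h2 := hrows j
      rw [hj, h] at h2
      simp at h2
    have hsj : rowSupp H j.castSucc = {a, b} := (hsupp j).symm.trans hj
    have hea : ({a, b} : Finset (Fin n)).erase a = {b} := by
      rw [Finset.erase_insert (by simp [hab])]
    have heb : ({a, b} : Finset (Fin n)).erase b = {a} := by
      rw [Finset.pair_comm, Finset.erase_insert (by simp [Ne.symm hab])]
    have h1 := hc j.castSucc a (by rw [hsj]; simp)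
    have h2 := hc j.castSucc b (by rw [hsj]; simp)
    rw [hsj, hea, Finset.sum_singleton] at h1
    rw [hsj, heb, Finset.sum_singleton] at h2
    linarith
  · rintro ⟨h0, hstep, hlastc⟩
    refine ⟨h0, ?_⟩
    intro j ℓ hℓ
    induction j using Fin.lastCases with
    | last => exact hlastc ℓ hℓ
    | cast j0 =>
      obtain ⟨a, b, hab, hset⟩ := Finset.card_eq_two.mp (hrows j0)
      have hsj : rowSupp H j0.castSucc = {a, b} := (hsupp j0).symm.trans hset
      have hxab : x a = x b := hstep a b ⟨j0, hset⟩
      rw [hsj] at hℓ ⊢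
      have hea : ({a, b} : Finset (Fin n)).erase a = {b} := by
        rw [Finset.erase_insert (by simp [hab])]
      have heb : ({a, b} : Finset (Fin n)).erase b = {a} := by
        rw [Finset.pair_comm, Finset.erase_insert (by simp [Ne.symm hab])]
      rcases Finset.mem_insert.mp hℓ with rfl | hb
      · rw [hea, Finset.sum_singleton]; exact le_of_eq hxab
      · rw [Finset.mem_singleton] at hb
        subst hb
        rw [heb, Finset.sum_singleton]; exact le_of_eq hxab.symm

lemma sum_eq_ncard_mul8 {n : ℕ} (x : Fin n → ℝ) (s : Set (Fin n)) (c : ℝ)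
    (h : ∀ i ∈ s, x i = c) :
    ∑ i ∈ (Set.toFinite s).toFinset, x i = (s.ncard : ℝ) * c := by
  rw [Set.ncard_eq_toFinset_card s (Set.toFinite s)]
  rw [Finset.sum_congr rfl (fun i hi => h i ((Set.Finite.mem_toFinset _).mp hi))]
  simp [mul_comm]

/-- The chain-equivalence class of a column. -/
def cls8 (Hh : Matrix J I (ZMod 2)) (i : I) : Set I := {i' | chainRel Hh i i'}

lemma self_mem_cls8 (Hh : Matrix J I (ZMod 2)) (i : I) : i ∈ cls8 Hh i :=
  chainRel_refl8 Hh i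

lemma cls8_eq_of_rel {Hh : Matrix J I (ZMod 2)} {a b : I} (h : chainRel Hh a b) :
    cls8 Hh a = cls8 Hh b := by
  ext c
  exact ⟨fun h2 => chainRel_trans8 (chainRel_symm8 h) h2, fun h2 => chainRel_trans8 h h2⟩

lemma cls8_eq_of_mem {Hh : Matrix J I (ZMod 2)} {a i : I} (h : a ∈ cls8 Hh i) :
    cls8 Hh i = cls8 Hh a := cls8_eq_of_rel h

lemma rel_of_mem_cls8 {Hh : Matrix J I (ZMod 2)} {a b i : I} (h1 : a ∈ cls8 Hh i)
    (h2 : b ∈ cls8 Hh i) : chainRel Hh a b :=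
  chainRel_trans8 (chainRel_symm8 h1) h2

end Aux8

/-- Let `H` be a binary matrix whose first rows (all but the last) have Hamming
weight exactly 2; let `Ĥ` consist of these rows, `R` its associated chain equivalence relation,
and `𝒮` its set of equivalence classes.  Assume the support `I_m` of the last row meets each
class in at most one element, and let `𝒮'` be the classes meeting `I_m` and `𝒮''` the others.
If `|𝒮'| ≥ 2` or `𝒮'' ≠ ∅`, then
`w_maxfrac^min(H) = min( min_{S ≠ T ∈ 𝒮'} (|S|+|T|), min_{S ∈ 𝒮''} |S| )`,
where the minimum of an empty set is `+∞`. -/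
theorem statement8 {m n : ℕ} (H : Matrix (Fin (m + 1)) (Fin n) (ZMod 2))
    (Hhat : Matrix (Fin m) (Fin n) (ZMod 2))
    (hHhat : Hhat = Matrix.of fun j i => H j.castSucc i)
    (hrows : ∀ j, (rowSupp Hhat j).card = 2)
    (hlast : ∀ i ∈ rowSupp H (Fin.last m), ∀ i' ∈ rowSupp H (Fin.last m),
      chainRel Hhat i i' → i = i')
    (S' S'' : Set (Set (Fin n)))
    (hS' : S' = {S | (∃ i, S = {i' | chainRel Hhat i i'}) ∧
      ∃ i ∈ S, i ∈ rowSupp H (Fin.last m)})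
    (hS'' : S'' = {S | (∃ i, S = {i' | chainRel Hhat i i'}) ∧
      ¬∃ i ∈ S, i ∈ rowSupp H (Fin.last m)})
    (hne : 2 ≤ S'.ncard ∨ S''.Nonempty) :
    minPW wMaxFrac H = min
      (sInf {x : EReal | ∃ S ∈ S', ∃ T ∈ S', S ≠ T ∧
        x = (((S.ncard + T.ncard : ℕ) : ℝ) : EReal)})
      (sInf {x : EReal | ∃ S ∈ S'', x = (((S.ncard : ℕ) : ℝ) : EReal)}) := by
  classical
  set Im := rowSupp H (Fin.last m) with hImdef
  have hmemS' : ∀ S : Set (Fin n), S ∈ S' ↔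
      (∃ i, S = cls8 Hhat i) ∧ ∃ i ∈ S, i ∈ Im := by
    intro S; rw [hS']; exact Iff.rfl
  have hmemS'' : ∀ S : Set (Fin n), S ∈ S'' ↔
      (∃ i, S = cls8 Hhat i) ∧ ¬∃ i ∈ S, i ∈ Im := by
    intro S; rw [hS'']; exact Iff.rfl
  have hfilter : ∀ U : Set (Fin n),
      (Finset.univ.filter (· ∈ U)).card = U.ncard := by
    intro U
    rw [Set.ncard_eq_toFinset_card U (Set.toFinite U)]
    congr 1
    ext i
    simp [Set.Finite.mem_toFinset]
  -- generic witness construction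
  have hwit : ∀ U : Set (Fin n), (∀ a b : Fin n, chainRel Hhat a b → (a ∈ U ↔ b ∈ U)) →
      U.Nonempty → (∀ ℓ ∈ Im, ℓ ∈ U → ∃ ℓ', ℓ' ∈ Im.erase ℓ ∧ ℓ' ∈ U) →
      minPW wMaxFrac H ≤ ((U.ncard : ℝ) : EReal) := by
    intro U hUcl hUne hUlast
    obtain ⟨u0, hu0⟩ := hUne
    set x : Fin n → ℝ := fun i => if i ∈ U then 1 else 0 with hxdef
    have hx1 : ∀ i ∈ U, x i = 1 := fun i hi => if_pos hi
    have hx0' : ∀ i, i ∉ U → x i = 0 := fun i hi => if_neg hi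
    have hxnn : ∀ i, 0 ≤ x i := by
      intro i; rw [hxdef]; dsimp only; split <;> norm_num
    have hxcone : x ∈ fundCone H := by
      rw [mem_fundCone_iff8 H Hhat hHhat hrows]
      refine ⟨hxnn, ?_, ?_⟩
      · intro a b hstep
        have hr : chainRel Hhat a b :=
          (chainRel_iff_rtg Hhat a b).mpr (Relation.ReflTransGen.single hstep)
        rw [hxdef]
        exact if_congr (hUcl a b hr) rfl rfl
      · intro ℓ hℓ
        by_cases hmem : ℓ ∈ U
        · obtain ⟨ℓ', hℓ'K, hℓ'U⟩ := hUlast ℓ hℓ hmem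
          have h1 : x ℓ' ≤ ∑ i ∈ Im.erase ℓ, x i :=
            Finset.single_le_sum (fun i _ => hxnn i) hℓ'K
          rw [hx1 ℓ hmem]
          rw [hx1 ℓ' hℓ'U] at h1
          exact h1
        · rw [hx0' ℓ hmem]
          exact Finset.sum_nonneg fun i _ => hxnn i
    have hxne : x ≠ 0 := by
      intro h
      have := congrFun h u0
      rw [hx1 u0 hu0] at this
      simp at this
    have hsup : sSup (Set.range x) = 1 := by
      apply IsGreatest.csSup_eq
      constructor
      · exact ⟨u0, hx1 u0 hu0⟩
      · rintro y ⟨i, rfl⟩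
        rw [hxdef]; dsimp only; split <;> norm_num
    have hsum : ∑ i, x i = (U.ncard : ℝ) := by
      rw [hxdef]
      dsimp only
      rw [Finset.sum_boole]
      rw [hfilter U]
    have hval : wMaxFrac x = (U.ncard : ℝ) := by
      rw [wMaxFrac, hsup, hsum, div_one]
    have hle : minPW wMaxFrac H ≤ ((wMaxFrac x : ℝ) : EReal) :=
      sInf_le ⟨x, ⟨hxcone, by simpa using hxne⟩, rfl⟩
    rw [hval] at hle
    exact hle
  apply le_antisymm
  · -- minPW ≤ RHS
    apply le_min
    · apply le_sInf
      rintro e ⟨S, hS, T, hT, hST, rfl⟩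
      rw [hmemS'] at hS hT
      obtain ⟨⟨iS, hSeq⟩, ℓS, hℓSS, hℓSIm⟩ := hS
      obtain ⟨⟨iT, hTeq⟩, ℓT, hℓTT, hℓTIm⟩ := hT
      have hSeq' : S = cls8 Hhat iS := hSeq
      have hTeq' : T = cls8 Hhat iT := hTeq
      have hdisjST : Disjoint S T := by
        rw [Set.disjoint_left]
        intro a haS haT
        apply hST
        rw [hSeq', hTeq']
        rw [hSeq'] at haS
        rw [hTeq'] at haT
        rw [cls8_eq_of_mem haS, cls8_eq_of_mem haT]
      have hkey := hwit (S ∪ T) ?_ ⟨ℓS, Or.inl hℓSS⟩ ?_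
      · rw [Set.ncard_union_eq hdisjST] at hkey
        refine le_trans hkey ?_
        apply le_of_eq
        norm_cast
      · -- closure under chainRel
        intro a b hab
        rw [hSeq', hTeq']
        constructor
        · rintro (h | h)
          · exact Or.inl (chainRel_trans8 h hab)
          · exact Or.inr (chainRel_trans8 h hab)
        · rintro (h | h)
          · exact Or.inl (chainRel_trans8 h (chainRel_symm8 hab))
          · exact Or.inr (chainRel_trans8 h (chainRel_symm8 hab))
      · -- last-row condition
        intro ℓ hℓIm hℓU
        have hℓTneℓS : ℓT ≠ ℓS := by
          intro h
          apply hST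
          rw [hSeq', hTeq']
          rw [hSeq'] at hℓSS
          rw [hTeq'] at hℓTT
          rw [h] at hℓTT
          rw [cls8_eq_of_mem hℓSS, cls8_eq_of_mem hℓTT]
        rcases hℓU with hℓS' | hℓT'
        · have hr : ℓ = ℓS := by
            rw [hSeq'] at hℓS' hℓSS
            exact hlast ℓ hℓIm ℓS hℓSIm (rel_of_mem_cls8 hℓS' hℓSS)
          subst hr
          exact ⟨ℓT, Finset.mem_erase.mpr ⟨hℓTneℓS, hℓTIm⟩, Or.inr hℓTT⟩
        · have hr : ℓ = ℓT := by
            rw [hTeq'] at hℓT' hℓTT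
            exact hlast ℓ hℓIm ℓT hℓTIm (rel_of_mem_cls8 hℓT' hℓTT)
          subst hr
          exact ⟨ℓS, Finset.mem_erase.mpr ⟨Ne.symm hℓTneℓS, hℓSIm⟩, Or.inl hℓSS⟩
    · apply le_sInf
      rintro e ⟨S, hS, rfl⟩
      rw [hmemS''] at hS
      obtain ⟨⟨iS, hSeq⟩, hSnot⟩ := hS
      have hSeq' : S = cls8 Hhat iS := hSeq
      have hkey := hwit S ?_ ⟨iS, hSeq' ▸ self_mem_cls8 Hhat iS⟩ ?_
      · exact hkey
      · intro a b hab
        rw [hSeq']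
        exact ⟨fun h => chainRel_trans8 h hab, fun h => chainRel_trans8 h (chainRel_symm8 hab)⟩
      · intro ℓ hℓIm hℓS
        exact absurd ⟨ℓ, hℓS, hℓIm⟩ hSnot
  · -- RHS ≤ minPW
    apply le_sInf
    rintro eb ⟨x, ⟨hxc, hx0'⟩, rfl⟩
    have hx0 : x ≠ 0 := by simpa using hx0'
    obtain ⟨i0', hi0'⟩ : ∃ i, x i ≠ 0 := by
      by_contra h
      push_neg at h
      exact hx0 (funext h)
    haveI : Nonempty (Fin n) := ⟨i0'⟩
    obtain ⟨hpos, hstepc, hlastc⟩ := (mem_fundCone_iff8 H Hhat hHhat hrows x).mp hxc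
    have hconst : ∀ a b : Fin n, chainRel Hhat a b → x a = x b := fun a b h =>
      chainRel_const8 hstepc h
    set v := sSup (Set.range x) with hvdef
    have hvmem : v ∈ Set.range x :=
      Set.Nonempty.csSup_mem (Set.range_nonempty x) (Set.finite_range x)
    obtain ⟨i0, hi0⟩ := hvmem
    have hub : ∀ i, x i ≤ v := fun i =>
      le_csSup (Set.Finite.bddAbove (Set.finite_range x)) ⟨i, rfl⟩
    have hvpos : 0 < v :=
      lt_of_lt_of_le (lt_of_le_of_ne (hpos i0') (Ne.symm hi0')) (hub i0')
    have hxcls : ∀ i ∈ cls8 Hhat i0, x i = v := by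
      intro i hi
      rw [← hconst i0 i hi, hi0]
    have hsumS : ∑ i ∈ (Set.toFinite (cls8 Hhat i0)).toFinset, x i =
        ((cls8 Hhat i0).ncard : ℝ) * v := sum_eq_ncard_mul8 x _ v hxcls
    have hwfrac : wMaxFrac x = (∑ i, x i) / v := rfl
    by_cases hcase : ∃ ℓ ∈ cls8 Hhat i0, ℓ ∈ Im
    · -- the maximal class meets Im
      obtain ⟨ℓS, hℓScls, hℓSIm⟩ := hcase
      have hxℓS : x ℓS = v := hxcls ℓS hℓScls
      have hKsum : v ≤ ∑ i ∈ Im.erase ℓS, x i := by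
        rw [← hxℓS]
        exact hlastc ℓS hℓSIm
      have hKne : (Im.erase ℓS).Nonempty := by
        by_contra h
        rw [Finset.not_nonempty_iff_eq_empty] at h
        rw [h, Finset.sum_empty] at hKsum
        linarith
      obtain ⟨i1, hi1K, hi1min⟩ :=
        Finset.exists_min_image (Im.erase ℓS) (fun i => (cls8 Hhat i).ncard) hKne
      have hKneS : ∀ i ∈ Im.erase ℓS, cls8 Hhat i ≠ cls8 Hhat i0 := by
        intro i hi h
        obtain ⟨hine, hiIm⟩ := Finset.mem_erase.mp hi
        apply hine
        have hicls : i ∈ cls8 Hhat i0 := h ▸ self_mem_cls8 Hhat i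
        exact hlast i hiIm ℓS hℓSIm (rel_of_mem_cls8 hicls hℓScls)
      have hdisj1 : Disjoint ((Set.toFinite (cls8 Hhat i0)).toFinset)
          ((Im.erase ℓS).biUnion (fun i => (Set.toFinite (cls8 Hhat i)).toFinset)) := by
        rw [Finset.disjoint_left]
        intro a haS haB
        obtain ⟨i, hiK, hia⟩ := Finset.mem_biUnion.mp haB
        rw [Set.Finite.mem_toFinset] at haS hia
        apply hKneS i hiK
        rw [cls8_eq_of_mem hia, ← cls8_eq_of_mem haS]
      have hpair : (↑(Im.erase ℓS) : Set (Fin n)).PairwiseDisjoint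
          (fun i => (Set.toFinite (cls8 Hhat i)).toFinset) := by
        intro i hi i' hi' hii'
        rw [Finset.mem_coe] at hi hi'
        refine Finset.disjoint_left.mpr ?_
        intro a ha ha'
        rw [Set.Finite.mem_toFinset] at ha ha'
        apply hii'
        exact hlast i (Finset.mem_erase.mp hi).2 i' (Finset.mem_erase.mp hi').2
          (rel_of_mem_cls8 (self_mem_cls8 Hhat i)
            (by rw [cls8_eq_of_mem ha]; exact (cls8_eq_of_mem ha').symm ▸ self_mem_cls8 Hhat i'))
      have hi1Im : i1 ∈ Im := (Finset.mem_erase.mp hi1K).2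
      have hS'mem : cls8 Hhat i0 ∈ S' := (hmemS' _).mpr ⟨⟨i0, rfl⟩, ℓS, hℓScls, hℓSIm⟩
      have hT'mem : cls8 Hhat i1 ∈ S' :=
        (hmemS' _).mpr ⟨⟨i1, rfl⟩, i1, self_mem_cls8 Hhat i1, hi1Im⟩
      have hSTne : cls8 Hhat i0 ≠ cls8 Hhat i1 := fun h => hKneS i1 hi1K h.symm
      have hmemA : ((((cls8 Hhat i0).ncard + (cls8 Hhat i1).ncard : ℕ) : ℝ) : EReal) ∈
          {e : EReal | ∃ S ∈ S', ∃ T ∈ S', S ≠ T ∧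
            e = (((S.ncard + T.ncard : ℕ) : ℝ) : EReal)} :=
        ⟨_, hS'mem, _, hT'mem, hSTne, rfl⟩
      refine le_trans (min_le_left _ _) (le_trans (sInf_le hmemA) ?_)
      rw [EReal.coe_le_coe_iff, hwfrac, le_div_iff₀ hvpos]
      have hsumB : ∑ i' ∈ (Im.erase ℓS).biUnion
            (fun i => (Set.toFinite (cls8 Hhat i)).toFinset), x i'
          = ∑ i ∈ Im.erase ℓS, ∑ i' ∈ (Set.toFinite (cls8 Hhat i)).toFinset, x i' :=
        Finset.sum_biUnion hpair
      have hsumcls : ∀ i : Fin n, ∑ i' ∈ (Set.toFinite (cls8 Hhat i)).toFinset, x i'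
          = ((cls8 Hhat i).ncard : ℝ) * x i := fun i =>
        sum_eq_ncard_mul8 x _ (x i) (fun a ha => (hconst i a ha).symm)
      have h1 : ((cls8 Hhat i1).ncard : ℝ) * v ≤
          ∑ i ∈ Im.erase ℓS, ((cls8 Hhat i).ncard : ℝ) * x i := by
        calc ((cls8 Hhat i1).ncard : ℝ) * v
            ≤ ((cls8 Hhat i1).ncard : ℝ) * ∑ i ∈ Im.erase ℓS, x i :=
              mul_le_mul_of_nonneg_left hKsum (by positivity)
          _ = ∑ i ∈ Im.erase ℓS, ((cls8 Hhat i1).ncard : ℝ) * x i := by rw [Finset.mul_sum]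
          _ ≤ ∑ i ∈ Im.erase ℓS, ((cls8 Hhat i).ncard : ℝ) * x i :=
              Finset.sum_le_sum (fun i hi =>
                mul_le_mul_of_nonneg_right (Nat.cast_le.mpr (hi1min i hi)) (hpos i))
      have hA : ∑ i' ∈ (Set.toFinite (cls8 Hhat i0)).toFinset ∪ (Im.erase ℓS).biUnion
            (fun i => (Set.toFinite (cls8 Hhat i)).toFinset), x i' ≤ ∑ i, x i :=
        Finset.sum_le_sum_of_subset_of_nonneg (Finset.subset_univ _) (fun i _ _ => hpos i)
      have hB : ∑ i' ∈ (Set.toFinite (cls8 Hhat i0)).toFinset ∪ (Im.erase ℓS).biUnion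
            (fun i => (Set.toFinite (cls8 Hhat i)).toFinset), x i'
          = ((cls8 Hhat i0).ncard : ℝ) * v +
            ∑ i ∈ Im.erase ℓS, ((cls8 Hhat i).ncard : ℝ) * x i := by
        rw [Finset.sum_union hdisj1, hsumS, hsumB,
          Finset.sum_congr rfl (fun i _ => hsumcls i)]
      rw [hB] at hA
      push_cast
      linarith

    · -- the maximal class misses Im
      have hmemB : (((cls8 Hhat i0).ncard : ℝ) : EReal) ∈
          {e : EReal | ∃ S ∈ S'', e = (((S.ncard : ℕ) : ℝ) : EReal)} :=
        ⟨cls8 Hhat i0, (hmemS'' _).mpr ⟨⟨i0, rfl⟩, hcase⟩, by norm_num⟩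
      refine le_trans (min_le_right _ _) (le_trans (sInf_le hmemB) ?_)
      rw [EReal.coe_le_coe_iff, hwfrac, le_div_iff₀ hvpos]
      calc ((cls8 Hhat i0).ncard : ℝ) * v
          = ∑ i ∈ (Set.toFinite (cls8 Hhat i0)).toFinset, x i := hsumS.symm
        _ ≤ ∑ i, x i := Finset.sum_le_sum_of_subset_of_nonneg (Finset.subset_univ _)
            (fun i _ _ => hpos i)
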